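/- There exists a constant C > 0 with the following property: for every analytic polynomial f(z) = Σ_{k≥0} a_k z^k of one variable, every positive integer n, and every complex number ζ with |ζ| = 1, one has Σ_{j=1}^n | Σ_{k=0}^{j−1} a_k ζ^k |² ≤ C · n · (sup{ |f(z)| : |z| = 1 })². -/

import Mathlib

open Finset Complex

lemma orth (N : ℕ) (hN : 0 < N) (j k : ℕ) (hj : j < N) (hk : k < N) :
    ∑ t ∈ range N, ((Complex.exp (2 * Real.pi * I / N)) ^ j *
      (starRingEnd ℂ) ((Complex.exp (2 * Real.pi * I / N)) ^ k)) ^ t =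
    if j = k then (N : ℂ) else 0 := by
  set ω := Complex.exp (2 * Real.pi * I / N) with hω
  have hprim : IsPrimitiveRoot ω N := Complex.isPrimitiveRoot_exp N hN.ne'
  have habs : ‖ω‖ = 1 := by
    rw [hω, Complex.norm_exp]
    norm_num [Complex.div_re]
  have hconj : (starRingEnd ℂ) ω = ω⁻¹ := by
    rw [← Complex.inv_eq_conj habs]
  have hω1 : ω ^ N = 1 := hprim.pow_eq_one
  have hune : ω ≠ 0 := fun h => by simp [h, zero_pow hN.ne'] at hω1
  set u := ω ^ j * (starRingEnd ℂ) (ω ^ k) with hu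
  have hu' : u = ω ^ j * (ω ^ k)⁻¹ := by
    rw [hu, map_pow, hconj, inv_pow]
  by_cases hjk : j = k
  · subst hjk
    have : u = 1 := by rw [hu']; field_simp
    simp [this]
  · have huN : u ^ N = 1 := by
      have h2 : (ω⁻¹) ^ N = 1 := by rw [inv_pow, hω1, inv_one]
      rw [hu', mul_pow, ← pow_mul, mul_comm j N, pow_mul, hω1, one_pow, one_mul,
        ← inv_pow, ← pow_mul, mul_comm k N, pow_mul, h2, one_pow]
    have hune1 : u ≠ 1 := by
      intro h
      rw [hu'] at h
      have : ω ^ j = ω ^ k := by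
        field_simp at h
        exact h
      exact hjk (hprim.pow_inj hj hk this)
    rw [if_neg hjk, geom_sum_eq hune1, huN]
    simp

lemma parseval (N : ℕ) (hN : 0 < N) (c : ℕ → ℂ) :
    ∑ t ∈ range N, Complex.normSq (∑ j ∈ range N,
        c j * (Complex.exp (2 * Real.pi * I / N) ^ t) ^ j)
      = N * ∑ j ∈ range N, Complex.normSq (c j) := by
  set ω := Complex.exp (2 * Real.pi * I / N) with hω
  have key : (∑ t ∈ range N, (Complex.normSq (∑ j ∈ range N, c j * (ω ^ t) ^ j) : ℂ))
      = (N : ℂ) * ∑ j ∈ range N, (Complex.normSq (c j) : ℂ) := by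
    calc ∑ t ∈ range N, (Complex.normSq (∑ j ∈ range N, c j * (ω ^ t) ^ j) : ℂ)
        = ∑ t ∈ range N, (∑ j ∈ range N, c j * (ω ^ t) ^ j) *
            (starRingEnd ℂ) (∑ k ∈ range N, c k * (ω ^ t) ^ k) := by
          exact Finset.sum_congr rfl fun t _ => (Complex.mul_conj _).symm
      _ = ∑ t ∈ range N, ∑ j ∈ range N, ∑ k ∈ range N,
            (c j * (starRingEnd ℂ) (c k)) * ((ω ^ j * (starRingEnd ℂ) (ω ^ k)) ^ t) := by
          refine Finset.sum_congr rfl fun t _ => ?_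
          rw [map_sum, Finset.sum_mul_sum]
          refine Finset.sum_congr rfl fun j _ => Finset.sum_congr rfl fun k _ => ?_
          simp only [map_mul, map_pow, mul_pow, ← pow_mul]
          ring_nf
      _ = ∑ j ∈ range N, ∑ k ∈ range N,
            (c j * (starRingEnd ℂ) (c k)) * ∑ t ∈ range N, (ω ^ j * (starRingEnd ℂ) (ω ^ k)) ^ t := by
          rw [Finset.sum_comm]
          refine Finset.sum_congr rfl fun j _ => ?_
          rw [Finset.sum_comm]
          refine Finset.sum_congr rfl fun k _ => ?_
          rw [Finset.mul_sum]
      _ = ∑ j ∈ range N, ∑ k ∈ range N,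
            (c j * (starRingEnd ℂ) (c k)) * (if j = k then (N : ℂ) else 0) := by
          refine Finset.sum_congr rfl fun j hj => Finset.sum_congr rfl fun k hk => ?_
          rw [orth N hN j k (mem_range.mp hj) (mem_range.mp hk)]
      _ = ∑ j ∈ range N, (c j * (starRingEnd ℂ) (c j)) * N := by
          refine Finset.sum_congr rfl fun j hj => ?_
          simp only [mul_ite, mul_zero]
          rw [Finset.sum_ite_eq (range N) j (fun k => c j * (starRingEnd ℂ) (c k) * (N : ℂ))]
          simp [hj]
      _ = (N : ℂ) * ∑ j ∈ range N, (Complex.normSq (c j) : ℂ) := by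
          rw [Finset.mul_sum]
          refine Finset.sum_congr rfl fun j _ => ?_
          rw [Complex.mul_conj]
          ring
  exact_mod_cast key


/-- `f(z) = Σ_{k ≤ d} a_k z^k`. -/
noncomputable def polyEval1 (d : ℕ) (a : ℕ → ℂ) (z : ℂ) : ℂ :=
  ∑ k ∈ Finset.range (d + 1), a k * z ^ k

/-- `sup { |f(z)| : |z| = 1 }`. -/
noncomputable def supNormT1 (d : ℕ) (a : ℕ → ℂ) : ℝ :=
  sSup {x : ℝ | ∃ z : ℂ, ‖z‖ = 1 ∧ x = ‖polyEval1 d a z‖}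

/-- There is a constant `C > 0` such that for every analytic polynomial
`f(z) = Σ a_k z^k` of one variable, every positive integer `n`, and every `ζ` with
`|ζ| = 1`, one has `Σ_{j=1}^n |Σ_{k=0}^{j−1} a_k ζ^k|² ≤ C n ‖f‖²_{H∞}`. -/
theorem partial_sums_square_sum_estimate :
    ∃ C : ℝ, 0 < C ∧
      ∀ (d : ℕ) (a : ℕ → ℂ), (∀ k : ℕ, d < k → a k = 0) →
        ∀ n : ℕ, 0 < n → ∀ ζ : ℂ, ‖ζ‖ = 1 →
          ∑ j ∈ Finset.Icc 1 n,
              ‖∑ k ∈ Finset.range j, a k * ζ ^ k‖ ^ 2 ≤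
            C * n * (supNormT1 d a) ^ 2 := by
  refine ⟨1, one_pos, fun d a ha n hn ζ hζ => ?_⟩
  set N := d + n with hNdef
  have hN : 0 < N := by omega
  set ω := Complex.exp (2 * Real.pi * I / N) with hω
  have habsω : ‖ω‖ = 1 := by
    rw [hω, Complex.norm_exp]
    norm_num [Complex.div_re]
  set b : ℕ → ℂ := fun k => a k * ζ ^ k with hb
  set c : ℕ → ℂ := fun j => ∑ k ∈ range (d + 1),
    if k ≤ j ∧ j < k + n then b k else 0 with hc
  -- Step A : factorization
  have stepA : ∀ z : ℂ, ∑ j ∈ range N, c j * z ^ j =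
      (∑ k ∈ range (d + 1), b k * z ^ k) * (∑ m ∈ range n, z ^ m) := by
    intro z
    rw [Finset.sum_mul_sum]
    calc ∑ j ∈ range N, c j * z ^ j
        = ∑ j ∈ range N, ∑ k ∈ range (d + 1),
            (if k ≤ j ∧ j < k + n then b k * z ^ j else 0) := by
          refine Finset.sum_congr rfl fun j _ => ?_
          rw [hc, Finset.sum_mul]
          exact Finset.sum_congr rfl fun k _ => by rw [ite_mul, zero_mul]
      _ = ∑ k ∈ range (d + 1), ∑ j ∈ range N,
            (if k ≤ j ∧ j < k + n then b k * z ^ j else 0) := Finset.sum_comm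
      _ = ∑ k ∈ range (d + 1), ∑ j ∈ Finset.Ico k (k + n), b k * z ^ j := by
          refine Finset.sum_congr rfl fun k hk => ?_
          have hk' : k ≤ d := Nat.lt_succ_iff.mp (mem_range.mp hk)
          have hsets : (range N).filter (fun j => k ≤ j ∧ j < k + n) =
              Finset.Ico k (k + n) := by
            ext j
            simp only [Finset.mem_filter, Finset.mem_range, Finset.mem_Ico]
            omega
          rw [← Finset.sum_filter, hsets]
      _ = ∑ k ∈ range (d + 1), ∑ m ∈ range n, b k * z ^ k * z ^ m := by
          refine Finset.sum_congr rfl fun k _ => ?_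
          rw [Finset.sum_Ico_eq_sum_range]
          simp only [Nat.add_sub_cancel_left]
          exact Finset.sum_congr rfl fun m _ => by simp only [hb]; ring
  -- Step B : c j is the partial sum, for j < n
  have stepB : ∀ j : ℕ, j < n → c j = ∑ k ∈ range (j + 1), b k := by
    intro j hj
    have h1 : c j = ∑ k ∈ range (d + 1), if k ≤ j then b k else 0 := by
      rw [hc]
      refine Finset.sum_congr rfl fun k _ => ?_
      have : (k ≤ j ∧ j < k + n) ↔ k ≤ j := by constructor <;> intro h <;> [exact h.1; exact ⟨h, by omega⟩]
      exact if_congr this rfl rfl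
    have hbz : ∀ k, d < k → b k = 0 := fun k hk => by simp [hb, ha k hk]
    have h2 : ∑ k ∈ range (d + 1), (if k ≤ j then b k else 0) =
        ∑ k ∈ range (max (d + 1) (j + 1)), (if k ≤ j then b k else 0) := by
      refine Finset.sum_subset (Finset.range_subset_range.mpr (le_max_left _ _)) fun k _ hk => ?_
      have : d < k := by simp only [Finset.mem_range] at hk; omega
      simp [hbz k this]
    have h3 : ∑ k ∈ range (j + 1), b k =
        ∑ k ∈ range (max (d + 1) (j + 1)), (if k ≤ j then b k else 0) := by
      rw [← Finset.sum_subset (Finset.range_subset_range.mpr (le_max_right (d+1) (j+1)))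
        (fun k _ hk => by
          have : j < k := by simp only [Finset.mem_range] at hk; omega
          simp [Nat.not_le.mpr this])]
      refine Finset.sum_congr rfl fun k hk => ?_
      have : k ≤ j := Nat.lt_succ_iff.mp (Finset.mem_range.mp hk)
      simp [this]
    rw [h1, h2, ← h3]
  -- sup norm bound
  set M := supNormT1 d a with hM
  have hcont : Continuous fun z : ℂ => ‖polyEval1 d a z‖ := by
    apply continuous_norm.comp
    exact continuous_finset_sum _ fun k _ => continuous_const.mul (continuous_pow k)
  have hsetimg : {x : ℝ | ∃ z : ℂ, ‖z‖ = 1 ∧ x = ‖polyEval1 d a z‖} =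
      (fun z : ℂ => ‖polyEval1 d a z‖) '' Metric.sphere 0 1 := by
    ext x
    constructor
    · rintro ⟨z, hz, rfl⟩
      exact ⟨z, mem_sphere_zero_iff_norm.mpr hz, rfl⟩
    · rintro ⟨z, hz, rfl⟩
      exact ⟨z, mem_sphere_zero_iff_norm.mp hz, rfl⟩
  have hbdd : BddAbove {x : ℝ | ∃ z : ℂ, ‖z‖ = 1 ∧ x = ‖polyEval1 d a z‖} := by
    rw [hsetimg]
    exact ((isCompact_sphere (0:ℂ) 1).image hcont).bddAbove
  have hMle : ∀ z : ℂ, ‖z‖ = 1 → ‖polyEval1 d a z‖ ≤ M :=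
    fun z hz => le_csSup hbdd ⟨z, hz, rfl⟩
  have hM0 : 0 ≤ M := le_trans (norm_nonneg _) (hMle 1 (by simp))
  -- abs of ζ * ω^t
  have habst : ∀ t : ℕ, ‖ζ * ω ^ t‖ = 1 := fun t => by
    rw [norm_mul, norm_pow, hζ, habsω, one_pow, one_mul]
  -- normSq of Q at roots
  have stepF : ∀ t : ℕ, Complex.normSq (∑ j ∈ range N, c j * (ω ^ t) ^ j) =
      Complex.normSq (polyEval1 d a (ζ * ω ^ t)) * Complex.normSq (∑ m ∈ range n, (ω ^ t) ^ m) := by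
    intro t
    rw [stepA (ω ^ t), map_mul]
    congr 2
    rw [polyEval1]
    refine Finset.sum_congr rfl fun k _ => ?_
    rw [hb, mul_pow]
    ring
  -- Dirichlet kernel Parseval : ∑_t normSq D = N * n
  set c' : ℕ → ℂ := fun j => if j < n then 1 else 0 with hc'
  have hD : ∀ z : ℂ, ∑ j ∈ range N, c' j * z ^ j = ∑ m ∈ range n, z ^ m := by
    intro z
    rw [← Finset.sum_subset (Finset.range_subset_range.mpr (by omega : n ≤ N))
      (fun j _ hj => by
        have : ¬ j < n := fun h => hj (Finset.mem_range.mpr h)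
        simp [hc', this])]
    exact Finset.sum_congr rfl fun j hj => by simp [hc', Finset.mem_range.mp hj]
  have hDsum : ∑ t ∈ range N, Complex.normSq (∑ m ∈ range n, (ω ^ t) ^ m) = N * n := by
    have := parseval N hN c'
    simp only [← hω] at this
    calc ∑ t ∈ range N, Complex.normSq (∑ m ∈ range n, (ω ^ t) ^ m)
        = ∑ t ∈ range N, Complex.normSq (∑ j ∈ range N, c' j * (ω ^ t) ^ j) := by
          exact Finset.sum_congr rfl fun t _ => by rw [hD]
      _ = N * ∑ j ∈ range N, Complex.normSq (c' j) := this
      _ = N * n := by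
          congr 1
          calc ∑ j ∈ range N, Complex.normSq (c' j)
              = ∑ j ∈ range N, (if j < n then (1:ℝ) else 0) := by
                refine Finset.sum_congr rfl fun j _ => ?_
                by_cases h : j < n <;> simp [hc', h]
            _ = ((range N).filter (fun j => j < n)).card := by
                rw [Finset.sum_boole]
            _ = (n : ℝ) := by
                congr 1
                have : (range N).filter (fun j => j < n) = range n := by
                  ext j
                  simp only [Finset.mem_filter, Finset.mem_range]
                  omega
                rw [this, Finset.card_range]
  -- main Parseval chain
  have key : (N : ℝ) * ∑ j ∈ range N, Complex.normSq (c j) ≤ (N : ℝ) * (M ^ 2 * n) := by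
    have hp := parseval N hN c
    simp only [← hω] at hp
    calc (N : ℝ) * ∑ j ∈ range N, Complex.normSq (c j)
        = ∑ t ∈ range N, Complex.normSq (∑ j ∈ range N, c j * (ω ^ t) ^ j) := hp.symm
      _ = ∑ t ∈ range N, Complex.normSq (polyEval1 d a (ζ * ω ^ t)) *
            Complex.normSq (∑ m ∈ range n, (ω ^ t) ^ m) := by
          exact Finset.sum_congr rfl fun t _ => stepF t
      _ ≤ ∑ t ∈ range N, M ^ 2 * Complex.normSq (∑ m ∈ range n, (ω ^ t) ^ m) := by
          refine Finset.sum_le_sum fun t _ => ?_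
          refine mul_le_mul_of_nonneg_right ?_ (Complex.normSq_nonneg _)
          rw [← Complex.sq_norm]
          exact pow_le_pow_left₀ (norm_nonneg _) (hMle _ (habst t)) 2
      _ = M ^ 2 * (N * n) := by rw [← Finset.mul_sum, hDsum]
      _ = (N : ℝ) * (M ^ 2 * n) := by ring
  have key2 : ∑ j ∈ range N, Complex.normSq (c j) ≤ M ^ 2 * n := by
    have hNpos : (0:ℝ) < N := by exact_mod_cast hN
    exact le_of_mul_le_mul_left key hNpos
  -- assemble
  have lhs_eq : ∑ j ∈ Finset.Icc 1 n,
      ‖∑ k ∈ Finset.range j, a k * ζ ^ k‖ ^ 2 =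
      ∑ j ∈ range n, Complex.normSq (c j) := by
    rw [← Finset.Ico_add_one_right_eq_Icc, Finset.sum_Ico_eq_sum_range]
    have hrange : n + 1 - 1 = n := by omega
    rw [hrange]
    refine Finset.sum_congr rfl fun j hj => ?_
    rw [Complex.sq_norm, stepB j (Finset.mem_range.mp hj)]
    congr 1
    rw [add_comm 1 j]
  have mono : ∑ j ∈ range n, Complex.normSq (c j) ≤ ∑ j ∈ range N, Complex.normSq (c j) :=
    Finset.sum_le_sum_of_subset_of_nonneg (Finset.range_subset_range.mpr (by omega))
      (fun j _ _ => Complex.normSq_nonneg _)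
  calc ∑ j ∈ Finset.Icc 1 n, ‖∑ k ∈ Finset.range j, a k * ζ ^ k‖ ^ 2
      = ∑ j ∈ range n, Complex.normSq (c j) := lhs_eq
    _ ≤ ∑ j ∈ range N, Complex.normSq (c j) := mono
    _ ≤ M ^ 2 * n := key2
    _ = 1 * n * M ^ 2 := by ring
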